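/- Let p > 2 be a prime, let d > 1 be a divisor of p-1, let n ≥ 1, and let H be a subgroup of F_n. Then: (i) the intersection of the subgroups H·N, taken over all normal subgroups N of F_n such that F_n/N lies in Ab(p)∗Ab(d), equals H·L_{n,p,d}; (ii) H·L_{n,p,d} has finite index in F_n; (iii) H·L_{n,p,d} is finitely generated. -/

import Mathlib

/-- `subgroupPow m K` is the subgroup generated by all `m`-th powers of elements of `K`. -/
def subgroupPow {G : Type*} [Group G] (m : ℕ) (K : Subgroup G) : Subgroup G :=
  Subgroup.closure {x | ∃ u ∈ K, u ^ m = x}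

/-- `Kgen n m = [F_n, F_n] · pow_m(F_n)`. -/
def Kgen (n m : ℕ) : Subgroup (FreeGroup (Fin n)) :=
  ⁅(⊤ : Subgroup (FreeGroup (Fin n))), (⊤ : Subgroup (FreeGroup (Fin n)))⁆ ⊔
    subgroupPow m (⊤ : Subgroup (FreeGroup (Fin n)))

/-- `Lgen n p d = [K_{n,d}, K_{n,d}] · pow_p(K_{n,d})`. -/
def Lgen (n p d : ℕ) : Subgroup (FreeGroup (Fin n)) :=
  ⁅Kgen n d, Kgen n d⁆ ⊔ subgroupPow p (Kgen n d)

open scoped commutatorElement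

/-- A group `G` lies in `Ab(p) ∗ Ab(d)` if it is finite and has a normal subgroup `N` that is
abelian of exponent dividing `p`, with `G/N` abelian of exponent dividing `d`. -/
def InAbStar (p d : ℕ) (G : Type*) [Group G] : Prop :=
  Finite G ∧ ∃ N : Subgroup G, N.Normal ∧ (∀ a ∈ N, ∀ b ∈ N, a * b = b * a) ∧
    (∀ a ∈ N, a ^ p = 1) ∧ (∀ g h : G, ⁅g, h⁆ ∈ N) ∧ (∀ g : G, g ^ d ∈ N)

section Aux
variable {G : Type*} [Group G]

lemma mem_subgroupPow {m : ℕ} {K : Subgroup G} {u : G} (hu : u ∈ K) :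
    u ^ m ∈ subgroupPow m K :=
  Subgroup.subset_closure ⟨u, hu, rfl⟩

lemma subgroupPow_le {m : ℕ} {K M : Subgroup G} (h : ∀ u ∈ K, u ^ m ∈ M) :
    subgroupPow m K ≤ M := by
  rw [subgroupPow, Subgroup.closure_le]
  rintro x ⟨u, hu, rfl⟩
  exact h u hu

lemma subgroupPow_normal {m : ℕ} {K : Subgroup G} (hK : K.Normal) :
    (subgroupPow m K).Normal := by
  constructor
  intro x hx g
  have h1 : (MulAut.conj g).toMonoidHom x ∈
      (subgroupPow m K).map (MulAut.conj g).toMonoidHom :=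
    Subgroup.mem_map_of_mem _ hx
  have hle : (subgroupPow m K).map (MulAut.conj g).toMonoidHom ≤ subgroupPow m K := by
    rw [subgroupPow, MonoidHom.map_closure, Subgroup.closure_le]
    rintro _ ⟨_, ⟨u, hu, rfl⟩, rfl⟩
    refine Subgroup.subset_closure ⟨g * u * g⁻¹, hK.conj_mem u hu g, ?_⟩
    simp [conj_pow]
  have := hle h1
  simpa using this

lemma commutator_self_le (K : Subgroup G) : ⁅K, K⁆ ≤ K := by
  rw [Subgroup.commutator_le]
  intro g hg h hh
  rw [commutatorElement_def]
  exact K.mul_mem (K.mul_mem (K.mul_mem hg hh) (K.inv_mem hg)) (K.inv_mem hh)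

end Aux

instance Kgen_normal (n m : ℕ) : (Kgen n m).Normal := by
  haveI := subgroupPow_normal (m := m) (inferInstance : (⊤ : Subgroup (FreeGroup (Fin n))).Normal)
  exact Subgroup.sup_normal _ _

instance Lgen_normal (n p d : ℕ) : (Lgen n p d).Normal := by
  haveI := subgroupPow_normal (m := p) (Kgen_normal n d)
  exact Subgroup.sup_normal _ _

lemma commutator_mem_Kgen (n m : ℕ) (g h : FreeGroup (Fin n)) : ⁅g, h⁆ ∈ Kgen n m :=
  le_sup_left (α := Subgroup (FreeGroup (Fin n)))
    (Subgroup.commutator_mem_commutator (Subgroup.mem_top g) (Subgroup.mem_top h))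

lemma pow_mem_Kgen (n m : ℕ) (g : FreeGroup (Fin n)) : g ^ m ∈ Kgen n m :=
  le_sup_right (α := Subgroup (FreeGroup (Fin n))) (mem_subgroupPow (Subgroup.mem_top g))

lemma Lgen_le_Kgen (n p d : ℕ) : Lgen n p d ≤ Kgen n d :=
  sup_le (commutator_self_le _) (subgroupPow_le fun u hu => pow_mem hu p)

lemma commutator_mem_Lgen (n p d : ℕ) {g h : FreeGroup (Fin n)}
    (hg : g ∈ Kgen n d) (hh : h ∈ Kgen n d) : ⁅g, h⁆ ∈ Lgen n p d :=
  le_sup_left (α := Subgroup (FreeGroup (Fin n)))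
    (Subgroup.commutator_mem_commutator hg hh)

lemma pow_mem_Lgen (n p d : ℕ) {g : FreeGroup (Fin n)} (hg : g ∈ Kgen n d) :
    g ^ p ∈ Lgen n p d :=
  le_sup_right (α := Subgroup (FreeGroup (Fin n))) (mem_subgroupPow hg)

lemma freeGroup_fg (n : ℕ) : Group.FG (FreeGroup (Fin n)) :=
  Group.fg_iff.mpr ⟨Set.range FreeGroup.of, FreeGroup.closure_range_of _, Set.finite_range _⟩

/-- If `F_n / N` lies in `Ab(p) ∗ Ab(d)` then `Lgen n p d ≤ N`. -/
lemma Lgen_le_of_inAbStar {n p d : ℕ} (N : Subgroup (FreeGroup (Fin n))) (hN : N.Normal)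
    (h : InAbStar p d (FreeGroup (Fin n) ⧸ N)) : Lgen n p d ≤ N := by
  obtain ⟨_, M, _, hcomm, hpow, hcommutator, hdpow⟩ := h
  set π := QuotientGroup.mk' N with hπ
  have hK : Kgen n d ≤ M.comap π := by
    apply sup_le
    · rw [Subgroup.commutator_le]
      intro g _ h _
      show π ⁅g, h⁆ ∈ M
      rw [map_commutatorElement]
      exact hcommutator _ _
    · refine subgroupPow_le fun u _ => ?_
      show π (u ^ d) ∈ M
      rw [map_pow]
      exact hdpow (π u)
  have hker : Lgen n p d ≤ π.ker := by
    apply sup_le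
    · rw [Subgroup.commutator_le]
      intro g hg h hh
      rw [MonoidHom.mem_ker, map_commutatorElement, commutatorElement_eq_one_iff_mul_comm]
      exact hcomm _ (hK hg) _ (hK hh)
    · refine subgroupPow_le fun u hu => ?_
      rw [MonoidHom.mem_ker, map_pow]
      exact hpow _ (hK hu)
  simpa [hπ, QuotientGroup.ker_mk'] using hker

lemma Kgen_index_ne_zero (n d : ℕ) (hd : 0 < d) : (Kgen n d).index ≠ 0 := by
  haveI : Group.FG (FreeGroup (Fin n)) := freeGroup_fg n
  set Q := FreeGroup (Fin n) ⧸ Kgen n d with hQ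
  haveI : Group.FG Q := Group.fg_of_surjective (QuotientGroup.mk'_surjective (Kgen n d))
  letI : CommGroup Q :=
    { (inferInstance : Group Q) with
      mul_comm := fun a b => by
        refine QuotientGroup.induction_on a fun g => QuotientGroup.induction_on b fun h => ?_
        show ((g * h : FreeGroup (Fin n)) : Q) = ((h * g : FreeGroup (Fin n)) : Q)
        rw [QuotientGroup.eq]
        have : (g * h)⁻¹ * (h * g) = ⁅h⁻¹, g⁻¹⁆ := by group
        rw [this]
        exact commutator_mem_Kgen n d _ _ }
  have tors : Monoid.IsTorsion Q := fun q => by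
    refine isOfFinOrder_iff_pow_eq_one.mpr ⟨d, hd, ?_⟩
    refine QuotientGroup.induction_on q fun g => ?_
    show ((g : Q)) ^ d = 1
    rw [← QuotientGroup.mk_pow, QuotientGroup.eq_one_iff]
    exact pow_mem_Kgen n d g
  have : Finite Q := CommGroup.finite_of_fg_torsion Q tors
  exact Subgroup.index_ne_zero_of_finite


lemma Lgen_index_ne_zero (n p d : ℕ) (hp : 0 < p) (hd : 0 < d) :
    (Lgen n p d).index ≠ 0 := by
  have hLK : Lgen n p d ≤ Kgen n d := Lgen_le_Kgen n p d
  rw [← Subgroup.relIndex_mul_index hLK]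
  refine Nat.mul_ne_zero ?_ (Kgen_index_ne_zero n d hd)
  haveI : Group.FG (FreeGroup (Fin n)) := freeGroup_fg n
  haveI : (Kgen n d).FiniteIndex := ⟨Kgen_index_ne_zero n d hd⟩
  haveI : Group.FG (Kgen n d) := Subgroup.fg_of_index_ne_zero _
  set L' := (Lgen n p d).subgroupOf (Kgen n d) with hL'
  set Q := Kgen n d ⧸ L' with hQ
  haveI : Group.FG Q := Group.fg_of_surjective (QuotientGroup.mk'_surjective L')
  letI : CommGroup Q :=
    { (inferInstance : Group Q) with
      mul_comm := fun a b => by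
        refine QuotientGroup.induction_on a fun g => QuotientGroup.induction_on b fun h => ?_
        show ((g * h : Kgen n d) : Q) = ((h * g : Kgen n d) : Q)
        rw [QuotientGroup.eq]
        rw [hL', Subgroup.mem_subgroupOf]
        have heq : (((g * h)⁻¹ * (h * g) : Kgen n d) : FreeGroup (Fin n)) =
            ⁅((h : FreeGroup (Fin n)))⁻¹, ((g : FreeGroup (Fin n)))⁻¹⁆ := by
          push_cast
          group
        rw [heq]
        exact commutator_mem_Lgen n p d ((Kgen n d).inv_mem h.2) ((Kgen n d).inv_mem g.2) }
  have tors : Monoid.IsTorsion Q := fun q => by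
    refine isOfFinOrder_iff_pow_eq_one.mpr ⟨p, hp, ?_⟩
    refine QuotientGroup.induction_on q fun g => ?_
    show ((g : Q)) ^ p = 1
    rw [← QuotientGroup.mk_pow, QuotientGroup.eq_one_iff]
    rw [hL', Subgroup.mem_subgroupOf]
    have heq : ((g ^ p : Kgen n d) : FreeGroup (Fin n)) = (g : FreeGroup (Fin n)) ^ p := by
      push_cast; rfl
    rw [heq]
    exact pow_mem_Lgen n p d g.2
  have : Finite Q := CommGroup.finite_of_fg_torsion Q tors
  exact Subgroup.index_ne_zero_of_finite

lemma inAbStar_quotient (n p d : ℕ) (hp : 0 < p) (hd : 0 < d) :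
    InAbStar p d (FreeGroup (Fin n) ⧸ Lgen n p d) := by
  constructor
  · haveI : (Lgen n p d).FiniteIndex := ⟨Lgen_index_ne_zero n p d hp hd⟩
    exact Subgroup.finite_quotient_of_finiteIndex
  · refine ⟨(Kgen n d).map (QuotientGroup.mk' (Lgen n p d)), ?_, ?_, ?_, ?_, ?_⟩
    · exact (Kgen_normal n d).map _ (QuotientGroup.mk'_surjective _)
    · rintro a ⟨k1, hk1, rfl⟩ b ⟨k2, hk2, rfl⟩
      show ((k1 : FreeGroup (Fin n)) : FreeGroup (Fin n) ⧸ Lgen n p d) * k2 = (k2 : _) * k1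
      rw [← QuotientGroup.mk_mul, ← QuotientGroup.mk_mul, QuotientGroup.eq]
      have heq : (k1 * k2)⁻¹ * (k2 * k1) = ⁅k2⁻¹, k1⁻¹⁆ := by group
      rw [heq]
      exact commutator_mem_Lgen n p d ((Kgen n d).inv_mem hk2) ((Kgen n d).inv_mem hk1)
    · rintro a ⟨k, hk, rfl⟩
      show ((k : FreeGroup (Fin n)) : FreeGroup (Fin n) ⧸ Lgen n p d) ^ p = 1
      rw [← QuotientGroup.mk_pow, QuotientGroup.eq_one_iff]
      exact pow_mem_Lgen n p d hk
    · intro g h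
      refine QuotientGroup.induction_on g fun g => QuotientGroup.induction_on h fun h => ?_
      exact ⟨⁅g, h⁆, commutator_mem_Kgen n d g h, by rw [QuotientGroup.mk'_apply]; rfl⟩
    · intro g
      refine QuotientGroup.induction_on g fun g => ?_
      exact ⟨g ^ d, pow_mem_Kgen n d g, by rw [QuotientGroup.mk'_apply]; rfl⟩

/-- (i) The intersection of the subgroups `H · N`, over all normal subgroups `N` of `F_n` with
`F_n / N ∈ Ab(p) ∗ Ab(d)`, equals `H · L_{n,p,d}`; (ii) `H · L_{n,p,d}` has finite index in
`F_n`; (iii) `H · L_{n,p,d}` is finitely generated. -/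
theorem stmt_3 (p d n : ℕ) (hp : p.Prime) (hp2 : 2 < p) (hd : 1 < d)
    (hdvd : d ∣ p - 1) (hn : 1 ≤ n) (H : Subgroup (FreeGroup (Fin n))) :
    (⨅ N ∈ {N : Subgroup (FreeGroup (Fin n)) |
        ∃ hN : N.Normal, letI := hN; InAbStar p d (FreeGroup (Fin n) ⧸ N)},
      H ⊔ N) = H ⊔ Lgen n p d ∧
    (H ⊔ Lgen n p d).FiniteIndex ∧
    (H ⊔ Lgen n p d).FG := by
  have hp0 : 0 < p := hp.pos
  have hd0 : 0 < d := by omega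
  have hidx := Lgen_index_ne_zero n p d hp0 hd0
  have hmem : Lgen n p d ∈ {N : Subgroup (FreeGroup (Fin n)) |
      ∃ hN : N.Normal, letI := hN; InAbStar p d (FreeGroup (Fin n) ⧸ N)} :=
    ⟨Lgen_normal n p d, inAbStar_quotient n p d hp0 hd0⟩
  have hfi : (H ⊔ Lgen n p d).FiniteIndex := by
    refine ⟨fun h0 => hidx ?_⟩
    have hdvd2 := Subgroup.index_dvd_of_le (le_sup_right : Lgen n p d ≤ H ⊔ Lgen n p d)
    rw [h0] at hdvd2
    exact zero_dvd_iff.mp hdvd2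
  refine ⟨le_antisymm (iInf₂_le _ hmem) (le_iInf₂ fun N hN => ?_), hfi, ?_⟩
  · obtain ⟨hnorm, habs⟩ := hN
    exact sup_le_sup_left (Lgen_le_of_inAbStar N hnorm habs) H
  · haveI : Group.FG (FreeGroup (Fin n)) := freeGroup_fg n
    haveI := hfi
    exact (Group.fg_iff_subgroup_fg _).mp (Subgroup.fg_of_index_ne_zero _)
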